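/- arXiv:1501.07045 — 5 statements merged into one kernel-verified Lean document; each statement's English description precedes it below -/
import Mathlib

section
/- Let X and Y be sets and let Γ : ℓ²(X) → ℓ²(X) ⊗ ℓ²(Y) be a bounded operator satisfying: (1) Γ* ∘ Γ = id; (2) (Δ_X ⊗ id) ∘ Γ = (id ⊗ Γ) ∘ Δ_X; (3) (id ⊗ Δ_Y) ∘ Γ = (Γ ⊗ id) ∘ Γ. Then there exists a unique function f : X → Y such that Γ(e_x) = e_x ⊗ e_{f(x)} for all x ∈ X. -/
set_option maxHeartbeats 1000000

open scoped ComplexConjugate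

noncomputable def stmt7Eval {I : Type} [DecidableEq I] (j : I) :
    lp (fun _ : I => ℂ) 2 →L[ℂ] ℂ :=
  innerSL ℂ (lp.single 2 j (1:ℂ))

lemma stmt7Eval_apply {I : Type} [DecidableEq I] (j : I) (f : lp (fun _ : I => ℂ) 2) :
    stmt7Eval j f = f j := by
  simp [stmt7Eval, lp.inner_single_left, RCLike.inner_apply]

lemma stmt7_single_coord {I : Type} [DecidableEq I] (i : I) (a : ℂ) (j : I) :
    (lp.single 2 i a : lp (fun _ : I => ℂ) 2) j = if j = i then a else 0 := by
  rw [lp.single_apply]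
  split_ifs with h
  · subst h; simp [Pi.single_apply]
  · simp [Pi.single_apply, h]

lemma stmt7_hasSum_coord {I J : Type} [DecidableEq I] [DecidableEq J]
    (T : lp (fun _ : I => ℂ) 2 →L[ℂ] lp (fun _ : J => ℂ) 2)
    (f : lp (fun _ : I => ℂ) 2) (j : J) :
    HasSum (fun i => f i * (T (lp.single 2 i 1)) j) ((T f) j) := by
  have h1 : HasSum (fun i : I => lp.single 2 i (f i)) f :=
    lp.hasSum_single (by norm_num) f
  have h3 := (h1.mapL T).mapL (stmt7Eval j)
  rw [stmt7Eval_apply] at h3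
  convert h3 using 2 with i
  have : lp.single 2 i (f i) = f i • (lp.single 2 i 1 : lp (fun _ : I => ℂ) 2) := by
    rw [← lp.single_smul]; simp
  rw [this, map_smul, map_smul, stmt7Eval_apply, smul_eq_mul]




/-- If a bounded operator `Γ : ℓ²(X) → ℓ²(X) ⊗ ℓ²(Y) ≅ ℓ²(X × Y)`
satisfies `Γ*Γ = id`, `(Δ_X ⊗ id) ∘ Γ = (id ⊗ Γ) ∘ Δ_X` and
`(id ⊗ Δ_Y) ∘ Γ = (Γ ⊗ id) ∘ Γ`, then there is a unique `f : X → Y` with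
`Γ(e_x) = e_x ⊗ e_{f(x)}` for all `x`.  The operators `id ⊗ Γ` and `Γ ⊗ id`
are specified through the isometric embeddings `ι a = e_a ⊗ -`, `κ y = - ⊗ e_y`
and their analogues on the larger spaces. -/
theorem stmt_7 {X Y : Type} [DecidableEq X] [DecidableEq Y]
    (Γ : lp (fun _ : X => ℂ) 2 →L[ℂ] lp (fun _ : X × Y => ℂ) 2)
    (ΔX : lp (fun _ : X => ℂ) 2 →L[ℂ] lp (fun _ : X × X => ℂ) 2)
    (hΔX : ∀ x : X, ΔX (lp.single 2 x 1) = lp.single 2 (x, x) 1)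
    -- (1) `Γ* ∘ Γ = id`
    (h1 : ContinuousLinearMap.adjoint Γ ∘L Γ =
      ContinuousLinearMap.id ℂ (lp (fun _ : X => ℂ) 2))
    -- `Δ_X ⊗ id_{ℓ²(Y)} : ℓ²(X × Y) → ℓ²(X × (X × Y))`
    (A : lp (fun _ : X × Y => ℂ) 2 →L[ℂ] lp (fun _ : X × (X × Y) => ℂ) 2)
    (hA : ∀ (x : X) (y : Y),
      A (lp.single 2 (x, y) 1) = lp.single 2 (x, (x, y)) 1)
    -- `e_a ⊗ - : ℓ²(X) → ℓ²(X × X)` and `e_a ⊗ - : ℓ²(X × Y) → ℓ²(X × (X × Y))`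
    (ι : X → (lp (fun _ : X => ℂ) 2 →L[ℂ] lp (fun _ : X × X => ℂ) 2))
    (hι : ∀ a b : X, ι a (lp.single 2 b 1) = lp.single 2 (a, b) 1)
    (ι' : X → (lp (fun _ : X × Y => ℂ) 2 →L[ℂ] lp (fun _ : X × (X × Y) => ℂ) 2))
    (hι' : ∀ (a b : X) (y : Y),
      ι' a (lp.single 2 (b, y) 1) = lp.single 2 (a, (b, y)) 1)
    -- `B = id_{ℓ²(X)} ⊗ Γ`
    (B : lp (fun _ : X × X => ℂ) 2 →L[ℂ] lp (fun _ : X × (X × Y) => ℂ) 2)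
    (hB : ∀ (a : X) (v : lp (fun _ : X => ℂ) 2), B (ι a v) = ι' a (Γ v))
    -- (2) `(Δ_X ⊗ id) ∘ Γ = (id ⊗ Γ) ∘ Δ_X`
    (h2 : A ∘L Γ = B ∘L ΔX)
    -- `id_{ℓ²(X)} ⊗ Δ_Y : ℓ²(X × Y) → ℓ²(X × (Y × Y))`
    (C : lp (fun _ : X × Y => ℂ) 2 →L[ℂ] lp (fun _ : X × (Y × Y) => ℂ) 2)
    (hC : ∀ (x : X) (y : Y),
      C (lp.single 2 (x, y) 1) = lp.single 2 (x, (y, y)) 1)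
    -- `- ⊗ e_y : ℓ²(X) → ℓ²(X × Y)` and `- ⊗ e_y : ℓ²(X × Y) → ℓ²(X × (Y × Y))`
    (κ : Y → (lp (fun _ : X => ℂ) 2 →L[ℂ] lp (fun _ : X × Y => ℂ) 2))
    (hκ : ∀ (y : Y) (x : X), κ y (lp.single 2 x 1) = lp.single 2 (x, y) 1)
    (τ : Y → (lp (fun _ : X × Y => ℂ) 2 →L[ℂ] lp (fun _ : X × (Y × Y) => ℂ) 2))
    (hτ : ∀ (y : Y) (x : X) (y₁ : Y),
      τ y (lp.single 2 (x, y₁) 1) = lp.single 2 (x, (y₁, y)) 1)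
    -- `D = Γ ⊗ id_{ℓ²(Y)}`
    (D : lp (fun _ : X × Y => ℂ) 2 →L[ℂ] lp (fun _ : X × (Y × Y) => ℂ) 2)
    (hD : ∀ (y : Y) (v : lp (fun _ : X => ℂ) 2), D (κ y v) = τ y (Γ v))
    -- (3) `(id ⊗ Δ_Y) ∘ Γ = (Γ ⊗ id) ∘ Γ`
    (h3 : C ∘L Γ = D ∘L Γ) :
    ∃! f : X → Y, ∀ x : X, Γ (lp.single 2 x 1) = lp.single 2 (x, f x) 1 := by
  
  classical
  -- coordinate formula for `τ y h`
  have τcoord : ∀ (y : Y) (h : lp (fun _ : X × Y => ℂ) 2) (a : X) (y₁ y₂ : Y),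
      (τ y h) (a, (y₁, y₂)) = if y₂ = y then h (a, y₁) else 0 := by
    intro y h a y₁ y₂
    have hs := stmt7_hasSum_coord (τ y) h (a, (y₁, y₂))
    have heq : (fun p : X × Y => h p * (τ y (lp.single 2 p 1)) (a, (y₁, y₂)))
        = fun p => if p = (a, y₁) then (if y₂ = y then h (a, y₁) else 0) else 0 := by
      funext p
      obtain ⟨b, y'⟩ := p
      rw [hτ y b y', stmt7_single_coord]
      rcases eq_or_ne a b with hb | hb
      · subst hb
        rcases eq_or_ne y₁ y' with hy1 | hy1
        · subst hy1
          rcases eq_or_ne y₂ y with hy2 | hy2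
          · subst hy2; simp
          · simp [Prod.mk.injEq, hy2]
        · simp [Prod.mk.injEq, hy1, Ne.symm hy1]
      · simp [Prod.mk.injEq, hb, Ne.symm hb]
    rw [heq] at hs
    exact hs.unique (hasSum_ite_eq _ _)
  have main : ∀ x : X, ∃ y : Y, Γ (lp.single 2 x 1) = lp.single 2 (x, y) 1 := by
    intro x
    set g : lp (fun _ : X × Y => ℂ) 2 := Γ (lp.single 2 x 1) with hgdef
    -- A g = ι' x g
    have hAg : A g = ι' x g := by
      have h := DFunLike.congr_fun h2 (lp.single 2 x 1)
      simp only [ContinuousLinearMap.comp_apply] at h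
      rw [hΔX x, ← hι x x, hB x, ← hgdef] at h
      exact h
    -- g vanishes off {x} × Y
    have hzero : ∀ (a : X) (y : Y), a ≠ x → g (a, y) = 0 := by
      intro a y hax
      have hsL := stmt7_hasSum_coord A g (a, (a, y))
      have hsR := stmt7_hasSum_coord (ι' x) g (a, (a, y))
      have heqL : (fun p : X × Y => g p * (A (lp.single 2 p 1)) (a, (a, y)))
          = fun p => if p = (a, y) then g (a, y) else 0 := by
        funext p
        obtain ⟨b, y'⟩ := p
        rw [hA b y', stmt7_single_coord]
        rcases eq_or_ne a b with hb | hb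
        · subst hb
          rcases eq_or_ne y y' with hy | hy
          · subst hy; simp
          · simp [Prod.mk.injEq, hy, Ne.symm hy]
        · simp [Prod.mk.injEq, hb, Ne.symm hb]
      have heqR : (fun p : X × Y => g p * (ι' x (lp.single 2 p 1)) (a, (a, y)))
          = fun _ => (0 : ℂ) := by
        funext p
        obtain ⟨b, y'⟩ := p
        rw [hι' x b y', stmt7_single_coord]
        simp [Prod.mk.injEq, hax]
      rw [heqL] at hsL
      rw [heqR] at hsR
      have hL : (A g) (a, (a, y)) = g (a, y) := hsL.unique (hasSum_ite_eq _ _)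
      have hR : (ι' x g) (a, (a, y)) = 0 := hsR.unique hasSum_zero
      rw [← hL, hAg, hR]
    -- g ≠ 0, so it has a nonzero coordinate, necessarily of the form (x, y₀)
    have hgne : ∃ p : X × Y, g p ≠ 0 := by
      by_contra hcon
      push_neg at hcon
      have hg0 : g = 0 := lp.ext (funext fun p => by simp [hcon p])
      have h := DFunLike.congr_fun h1 (lp.single 2 x 1)
      simp only [ContinuousLinearMap.comp_apply, ContinuousLinearMap.id_apply] at h
      rw [← hgdef, hg0, map_zero] at h
      have := congrFun (congrArg
        (fun v : lp (fun _ : X => ℂ) 2 => (v : ∀ _ : X, ℂ)) h) x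
      simp only [stmt7_single_coord, if_pos rfl] at this
      simpa using this
    obtain ⟨⟨a, y₀⟩, hpne⟩ := hgne
    have hax : a = x := by
      by_contra h
      exact hpne (hzero a y₀ h)
    rw [hax] at hpne
    clear hax a
    -- the key multiplicative identity
    have key : ∀ y₁ y₂ : Y,
        (if y₁ = y₂ then g (x, y₁) else 0) = g (x, y₂) * g (x, y₁) := by
      intro y₁ y₂
      have hCD : C g = D g := by
        have h := DFunLike.congr_fun h3 (lp.single 2 x 1)
        simp only [ContinuousLinearMap.comp_apply] at h
        rwa [← hgdef] at h
      have hsL := stmt7_hasSum_coord C g (x, (y₁, y₂))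
      have hsR := stmt7_hasSum_coord D g (x, (y₁, y₂))
      have heqL : (fun p : X × Y => g p * (C (lp.single 2 p 1)) (x, (y₁, y₂)))
          = fun p => if p = (x, y₁) then (if y₁ = y₂ then g (x, y₁) else 0) else 0 := by
        funext p
        obtain ⟨b, y'⟩ := p
        rw [hC b y', stmt7_single_coord]
        rcases eq_or_ne x b with hb | hb
        · subst hb
          rcases eq_or_ne y₁ y' with hy1 | hy1
          · subst hy1
            rcases eq_or_ne y₁ y₂ with hy2 | hy2
            · subst hy2; simp
            · simp [Prod.mk.injEq, hy2, Ne.symm hy2]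
          · simp [Prod.mk.injEq, hy1, Ne.symm hy1]
        · simp [Prod.mk.injEq, hb, Ne.symm hb]
      have heqR : (fun p : X × Y => g p * (D (lp.single 2 p 1)) (x, (y₁, y₂)))
          = fun p => if p = (x, y₂) then g (x, y₂) * g (x, y₁) else 0 := by
        funext p
        obtain ⟨b, y'⟩ := p
        rw [← hκ y' b, hD y', τcoord]
        rcases eq_or_ne x b with hb | hb
        · subst hb
          rcases eq_or_ne y₂ y' with hy2 | hy2
          · subst hy2
            rw [← hgdef]
            simp
          · simp [Prod.mk.injEq, hy2, Ne.symm hy2]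
        · rw [hzero b y' (Ne.symm hb)]
          simp [Prod.mk.injEq, hb, Ne.symm hb]
      rw [heqL] at hsL
      rw [heqR] at hsR
      have hL : (C g) (x, (y₁, y₂)) = if y₁ = y₂ then g (x, y₁) else 0 :=
        hsL.unique (hasSum_ite_eq _ _)
      have hR : (D g) (x, (y₁, y₂)) = g (x, y₂) * g (x, y₁) :=
        hsR.unique (hasSum_ite_eq _ _)
      rw [← hL, hCD, hR]
    -- conclude g = e_{(x, y₀)}
    have hc1 : g (x, y₀) = 1 := by
      have h := key y₀ y₀
      rw [if_pos rfl] at h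
      have h' : g (x, y₀) * 1 = g (x, y₀) * g (x, y₀) := by rw [mul_one, ← h]
      exact (mul_left_cancel₀ hpne h').symm
    have hothers : ∀ y : Y, y ≠ y₀ → g (x, y) = 0 := by
      intro y hy
      have h := key y y₀
      rw [if_neg hy, hc1, one_mul] at h
      exact h.symm
    refine ⟨y₀, lp.ext (funext fun p => ?_)⟩
    obtain ⟨b, y⟩ := p
    show g (b, y) = _
    rw [stmt7_single_coord]
    rcases eq_or_ne b x with hb | hb
    · subst hb
      rcases eq_or_ne y y₀ with hy | hy
      · subst hy
        rw [hc1, if_pos rfl]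
      · rw [hothers y hy]
        simp [Prod.mk.injEq, hy]
    · rw [hzero b y hb]
      simp [Prod.mk.injEq, hb]
  refine ⟨fun x => (main x).choose, fun x => (main x).choose_spec, ?_⟩
  intro f' hf'
  funext x
  by_cases hxy : f' x = (main x).choose
  · exact hxy
  · exfalso
    have h := (hf' x).symm.trans (main x).choose_spec
    have h2' := congrFun (congrArg
      (fun v : lp (fun _ : X × Y => ℂ) 2 => (v : ∀ _ : X × Y, ℂ)) h) (x, f' x)
    simp only [stmt7_single_coord] at h2'
    rw [if_neg (fun hc => hxy (congrArg Prod.snd hc))] at h2'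
    simp at h2'
end

section
/- In the setting of a Hilbert space H with isometric comultiplication Δ : H → H ⊗ H (Δ* Δ = id) defining the product a*b = Δ*(a⊗b), let χ be a character of the C*-algebra C generated by multiplication operators, with associated vector e_χ ∈ H satisfying ⟨e_χ, h⟩ = χ(m_h) for all h. Then: (1) Δ(e_χ) = e_χ ⊗ e_χ; (2) e_χ * e_χ = e_χ; (3) e_χ * h = χ(m_h)·e_χ for all h ∈ H; (4) ‖e_χ‖ = 1. -/
/-- Let `H` be a Hilbert space with an isometric comultiplication
`Δ : H → H ⊗ H` (the Hilbert tensor product `H ⊗ H` being axiomatized as a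
Hilbert space `T` with a bilinear map `tm` with dense range span and the
characteristic inner-product identity), defining the product
`a * b = Δ*(a ⊗ b)`.  If `χ` is a character of the C*-algebra `C` generated by
the multiplication operators, with associated vector `e_χ` satisfying
`⟨e_χ, h⟩ = χ(m_h)`, then: (1) `Δ(e_χ) = e_χ ⊗ e_χ`; (2) `e_χ * e_χ = e_χ`;
(3) `e_χ * h = χ(m_h)·e_χ`; (4) `‖e_χ‖ = 1`. -/
theorem stmt_11 {H T : Type}
    [NormedAddCommGroup H] [InnerProductSpace ℂ H] [CompleteSpace H]
    [NormedAddCommGroup T] [InnerProductSpace ℂ T] [CompleteSpace T]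
    (tm : H →L[ℂ] H →L[ℂ] T)
    (htm : ∀ a b c d : H,
      (inner ℂ (tm a b) (tm c d) : ℂ) = (inner ℂ a c : ℂ) * (inner ℂ b d : ℂ))
    (hdense :
      (Submodule.span ℂ (Set.range fun p : H × H => tm p.1 p.2)).topologicalClosure = ⊤)
    (Δ : H →L[ℂ] T)
    (hiso : ContinuousLinearMap.adjoint Δ ∘L Δ = ContinuousLinearMap.id ℂ H)
    (mul : H →L[ℂ] H →L[ℂ] H)
    (hmulΔ : ∀ a b : H, mul a b = ContinuousLinearMap.adjoint Δ (tm a b))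
    (hcomm : ∀ a b : H, mul a b = mul b a)
    (hassoc : ∀ a b c : H, mul (mul a b) c = mul a (mul b c))
    (C : Set (H →L[ℂ] H)) (hC : C = closure (Set.range fun h : H => mul h))
    (χ : (H →L[ℂ] H) → ℂ)
    (hχadd : ∀ f ∈ C, ∀ g ∈ C, χ (f + g) = χ f + χ g)
    (hχsmul : ∀ (c : ℂ), ∀ f ∈ C, χ (c • f) = c * χ f)
    (hχmul : ∀ f ∈ C, ∀ g ∈ C, χ (f * g) = χ f * χ g)
    (hχstar : ∀ f ∈ C, χ (star f) = starRingEnd ℂ (χ f))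
    (hχcont : ContinuousOn χ C)
    (hg : ∃ g : H, χ (mul g) = 1)
    (eχ : H) (heχ : ∀ h : H, (inner ℂ eχ h : ℂ) = χ (mul h)) :
    Δ eχ = tm eχ eχ ∧
    mul eχ eχ = eχ ∧
    (∀ h : H, mul eχ h = χ (mul h) • eχ) ∧
    ‖eχ‖ = 1 := by
  set D := ContinuousLinearMap.adjoint Δ with hD
  -- membership of multiplication operators in C
  have hmem : ∀ a : H, mul a ∈ C := by
    intro a
    rw [hC]
    exact subset_closure ⟨a, rfl⟩
  -- mul (mul a b) = mul a * mul b
  have hop : ∀ a b : H, mul (mul a b) = mul a * mul b := by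
    intro a b
    ext c
    simp [ContinuousLinearMap.mul_apply, hassoc]
  -- multiplicativity of inner ℂ against eχ
  have hB : ∀ a b : H, (inner ℂ eχ (mul a b) : ℂ) = (inner ℂ eχ a : ℂ) * (inner ℂ eχ b : ℂ) := by
    intro a b
    rw [heχ, hop, hχmul _ (hmem a) _ (hmem b), heχ, heχ]
  -- pointwise isometry
  have hisopt : ∀ x : H, D (Δ x) = x := by
    intro x
    have := congrArg (fun f => f x) hiso
    simpa using this
  have hnormΔ : ∀ x : H, (inner ℂ (Δ x) (Δ x) : ℂ) = inner ℂ x x := by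
    intro x
    have h1 : (inner ℂ (D (Δ x)) x : ℂ) = inner ℂ (Δ x) (Δ x) :=
      ContinuousLinearMap.adjoint_inner_left Δ x (Δ x)
    rw [hisopt] at h1
    exact h1.symm
  -- (1) Δ eχ = tm eχ eχ
  have h1 : Δ eχ = tm eχ eχ := by
    set u : T := Δ eχ - tm eχ eχ with hu
    have horth : ∀ a b : H, (inner ℂ u (tm a b) : ℂ) = 0 := by
      intro a b
      have hΔ : (inner ℂ (Δ eχ) (tm a b) : ℂ) = (inner ℂ eχ a : ℂ) * (inner ℂ eχ b : ℂ) := by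
        have : (inner ℂ eχ (D (tm a b)) : ℂ) = inner ℂ (Δ eχ) (tm a b) :=
          ContinuousLinearMap.adjoint_inner_right Δ eχ (tm a b)
        rw [← this, ← hmulΔ, hB]
      rw [hu, inner_sub_left, hΔ, htm]
      ring
    have hle : Submodule.span ℂ (Set.range fun p : H × H => tm p.1 p.2) ≤ (ℂ ∙ u)ᗮ := by
      rw [Submodule.span_le]
      rintro t ⟨⟨a, b⟩, rfl⟩
      refine Submodule.mem_orthogonal_singleton_iff_inner_left.mpr ?_
      rw [← inner_conj_symm, horth a b, map_zero]
    have hle2 : (Submodule.span ℂ (Set.range fun p : H × H => tm p.1 p.2)).topologicalClosure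
        ≤ (ℂ ∙ u)ᗮ :=
      Submodule.topologicalClosure_minimal _ hle (Submodule.isClosed_orthogonal _)
    rw [hdense] at hle2
    have humem : u ∈ (ℂ ∙ u)ᗮ := hle2 Submodule.mem_top
    have : (inner ℂ u u : ℂ) = 0 :=
      humem u (Submodule.mem_span_singleton_self u)
    have hu0 : u = 0 := inner_self_eq_zero.mp this
    have := sub_eq_zero.mp hu0
    exact this
  -- (2) mul eχ eχ = eχ
  have h2 : mul eχ eχ = eχ := by
    rw [hmulΔ, ← h1]
    exact hisopt eχ
  -- eχ ≠ 0
  obtain ⟨g, hgval⟩ := hg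
  have heg : (inner ℂ eχ g : ℂ) = 1 := by rw [heχ]; exact hgval
  have hne : eχ ≠ 0 := by
    intro h0
    rw [h0, inner_zero_left] at heg
    exact one_ne_zero heg.symm
  -- (4) norm 1 via ⟪eχ,eχ⟫ = 1
  have hee : (inner ℂ eχ eχ : ℂ) = 1 := by
    set c : ℂ := inner ℂ eχ eχ with hc
    have hidem : c * c = c := by
      rw [hc, ← hB, h2]
    have hcc : c * (c - 1) = 0 := by ring_nf; linear_combination hidem
    rcases mul_eq_zero.mp hcc with h | h
    · exact absurd (inner_self_eq_zero.mp (hc ▸ h)) hne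
    · exact sub_eq_zero.mp h
  have h4 : ‖eχ‖ = 1 := by
    have h2' : ‖eχ‖^2 = 1 := by
      have h := hee
      rw [inner_self_eq_norm_sq_to_K] at h
      exact_mod_cast Complex.ofReal_eq_one.mp (by push_cast at h ⊢; exact h)
    nlinarith [norm_nonneg eχ]
  -- key: if mul eχ v = v then Δ v = tm eχ v
  have hfix : ∀ v : H, mul eχ v = v → Δ v = tm eχ v := by
    intro v hv
    set t : T := tm eχ v with ht
    have htDt : (inner ℂ t (Δ v) : ℂ) = inner ℂ v v := by
      have hDt : D t = v := by rw [ht, ← hmulΔ, hv]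
      have : (inner ℂ (D t) (D t) : ℂ) = inner ℂ t (Δ (D t)) :=
        ContinuousLinearMap.adjoint_inner_left Δ (D t) t
      rw [hDt] at this
      exact this.symm
    have hΔt : (inner ℂ (Δ v) t : ℂ) = inner ℂ v v := by
      rw [← inner_conj_symm, htDt, inner_conj_symm]
    have htt : (inner ℂ t t : ℂ) = inner ℂ v v := by
      rw [ht, htm, hee, one_mul]
    have hzero : (inner ℂ (Δ v - t) (Δ v - t) : ℂ) = 0 := by
      rw [inner_sub_left, inner_sub_right, inner_sub_right, hnormΔ, hΔt, htDt, htt]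
      ring
    have := inner_self_eq_zero.mp hzero
    exact sub_eq_zero.mp this
  -- (3)
  have h3 : ∀ h : H, mul eχ h = χ (mul h) • eχ := by
    intro h
    set w : H := h - χ (mul h) • eχ with hw
    set u : H := mul eχ w with huu
    have hew : (inner ℂ eχ w : ℂ) = 0 := by
      rw [hw, inner_sub_right, inner_smul_right, hee, heχ]
      ring
    have hufix : mul eχ u = u := by
      rw [huu, ← hassoc, h2]
    have hΔu : Δ u = tm eχ u := hfix u hufix
    have hinner : ∀ a b : H, (inner ℂ u (mul a b) : ℂ) = (inner ℂ eχ a : ℂ) * (inner ℂ u b : ℂ) := by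
      intro a b
      have : (inner ℂ u (D (tm a b)) : ℂ) = inner ℂ (Δ u) (tm a b) :=
        ContinuousLinearMap.adjoint_inner_right Δ u (tm a b)
      rw [← hmulΔ] at this
      rw [this, hΔu, htm]
    have hu0 : (inner ℂ u u : ℂ) = 0 := by
      have : (inner ℂ u (mul w eχ) : ℂ) = (inner ℂ eχ w : ℂ) * (inner ℂ u eχ : ℂ) := hinner w eχ
      rw [hew, zero_mul, hcomm w eχ, ← huu] at this
      exact this
    have : u = 0 := inner_self_eq_zero.mp hu0
    have hmw : mul eχ w = mul eχ h - χ (mul h) • eχ := by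
      rw [hw, map_sub, map_smul, h2]
    rw [huu, hmw] at this
    exact sub_eq_zero.mp this
  exact ⟨h1, h2, h3, h4⟩
end

section
/- With notation as above, if χ₁ and χ₂ are two characters of C with associated idempotent unit vectors e_{χ₁}, e_{χ₂} (satisfying Δ(e_{χᵢ}) = e_{χᵢ} ⊗ e_{χᵢ} and ‖e_{χᵢ}‖ = 1), then ⟨e_{χ₁}, e_{χ₂}⟩ ∈ {0, 1}, and ⟨e_{χ₁}, e_{χ₂}⟩ = 1 if and only if χ₁ = χ₂. In particular distinct characters give orthogonal vectors e_χ. -/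
/-- In the setting of a Hilbert space `H` with isometric
comultiplication `Δ` and product `a*b = Δ*(a⊗b)`, if `χ₁, χ₂` are two
characters of the C*-algebra `C` generated by the multiplication operators,
with associated grouplike unit vectors `e₁, e₂` (`Δ(eᵢ) = eᵢ ⊗ eᵢ`,
`eᵢ * eᵢ = eᵢ`, `‖eᵢ‖ = 1`, `⟨eᵢ, h⟩ = χᵢ(m_h)`), then `⟨e₁, e₂⟩ ∈ {0, 1}`,
and `⟨e₁, e₂⟩ = 1` iff `χ₁ = χ₂` on `C`; in particular distinct characters
give orthogonal vectors. -/
theorem stmt_12 {H T : Type}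
    [NormedAddCommGroup H] [InnerProductSpace ℂ H] [CompleteSpace H]
    [NormedAddCommGroup T] [InnerProductSpace ℂ T] [CompleteSpace T]
    (tm : H →L[ℂ] H →L[ℂ] T)
    (htm : ∀ a b c d : H,
      (inner ℂ (tm a b) (tm c d) : ℂ) = (inner ℂ a c : ℂ) * (inner ℂ b d : ℂ))
    (hdense :
      (Submodule.span ℂ (Set.range fun p : H × H => tm p.1 p.2)).topologicalClosure = ⊤)
    (Δ : H →L[ℂ] T)
    (hiso : ContinuousLinearMap.adjoint Δ ∘L Δ = ContinuousLinearMap.id ℂ H)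
    (mul : H →L[ℂ] H →L[ℂ] H)
    (hmulΔ : ∀ a b : H, mul a b = ContinuousLinearMap.adjoint Δ (tm a b))
    (hcomm : ∀ a b : H, mul a b = mul b a)
    (hassoc : ∀ a b c : H, mul (mul a b) c = mul a (mul b c))
    (C : Set (H →L[ℂ] H)) (hC : C = closure (Set.range fun h : H => mul h))
    (χ₁ χ₂ : (H →L[ℂ] H) → ℂ)
    (hχ₁add : ∀ f ∈ C, ∀ g ∈ C, χ₁ (f + g) = χ₁ f + χ₁ g)
    (hχ₁smul : ∀ (c : ℂ), ∀ f ∈ C, χ₁ (c • f) = c * χ₁ f)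
    (hχ₁mul : ∀ f ∈ C, ∀ g ∈ C, χ₁ (f * g) = χ₁ f * χ₁ g)
    (hχ₁cont : ContinuousOn χ₁ C)
    (hχ₂add : ∀ f ∈ C, ∀ g ∈ C, χ₂ (f + g) = χ₂ f + χ₂ g)
    (hχ₂smul : ∀ (c : ℂ), ∀ f ∈ C, χ₂ (c • f) = c * χ₂ f)
    (hχ₂mul : ∀ f ∈ C, ∀ g ∈ C, χ₂ (f * g) = χ₂ f * χ₂ g)
    (hχ₂cont : ContinuousOn χ₂ C)
    (e₁ e₂ : H)
    (he₁ : ∀ h : H, (inner ℂ e₁ h : ℂ) = χ₁ (mul h))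
    (he₂ : ∀ h : H, (inner ℂ e₂ h : ℂ) = χ₂ (mul h))
    (hgl₁ : Δ e₁ = tm e₁ e₁) (hgl₂ : Δ e₂ = tm e₂ e₂)
    (hid₁ : mul e₁ e₁ = e₁) (hid₂ : mul e₂ e₂ = e₂)
    (hn₁ : ‖e₁‖ = 1) (hn₂ : ‖e₂‖ = 1) :
    ((inner ℂ e₁ e₂ : ℂ) = 0 ∨ (inner ℂ e₁ e₂ : ℂ) = 1) ∧
    ((inner ℂ e₁ e₂ : ℂ) = 1 ↔ Set.EqOn χ₁ χ₂ C) := by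
  have hx : (inner ℂ e₁ e₂ : ℂ) = (inner ℂ e₁ e₂ : ℂ) * (inner ℂ e₁ e₂ : ℂ) := by
    conv_lhs => rw [show e₁ = (ContinuousLinearMap.adjoint Δ ∘L Δ) e₁ by rw [hiso]; rfl]
    rw [ContinuousLinearMap.comp_apply, ContinuousLinearMap.adjoint_inner_left, hgl₁, hgl₂,
      htm]
  have h01 : (inner ℂ e₁ e₂ : ℂ) = 0 ∨ (inner ℂ e₁ e₂ : ℂ) = 1 := by
    have h : (inner ℂ e₁ e₂ : ℂ) * ((inner ℂ e₁ e₂ : ℂ) - 1) = 0 := by linear_combination -hx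
    rcases mul_eq_zero.mp h with h | h
    · exact Or.inl h
    · exact Or.inr (by linear_combination h)
  have key : (inner ℂ e₁ e₂ : ℂ) = 1 → e₁ = e₂ := by
    intro h1
    have hsq : ‖e₁ - e₂‖ ^ 2 = 0 := by
      rw [norm_sub_sq (𝕜 := ℂ), hn₁, hn₂, h1]
      norm_num
    have : e₁ - e₂ = 0 := by
      have := pow_eq_zero_iff (n := 2) (by norm_num) |>.mp hsq
      exact norm_eq_zero.mp this
    exact sub_eq_zero.mp this
  have hEq : e₁ = e₂ → Set.EqOn χ₁ χ₂ C := by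
    intro he
    have hS : Set.EqOn χ₁ χ₂ (Set.range fun h : H => mul h) := by
      rintro _ ⟨h, rfl⟩
      rw [← he₁, ← he₂, he]
    intro f hf
    have hf' : f ∈ closure (Set.range fun h : H => mul h) := hC ▸ hf
    have hne : (nhdsWithin f (Set.range fun h : H => mul h)).NeBot :=
      mem_closure_iff_nhdsWithin_neBot.mp hf'
    have hsub : (Set.range fun h : H => mul h) ⊆ C := hC ▸ subset_closure
    have t1 : Filter.Tendsto χ₁ (nhdsWithin f (Set.range fun h : H => mul h)) (nhds (χ₁ f)) :=
      (hχ₁cont f hf).mono_left (nhdsWithin_mono f hsub)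
    have t2 : Filter.Tendsto χ₂ (nhdsWithin f (Set.range fun h : H => mul h)) (nhds (χ₂ f)) :=
      (hχ₂cont f hf).mono_left (nhdsWithin_mono f hsub)
    have t1' : Filter.Tendsto χ₁ (nhdsWithin f (Set.range fun h : H => mul h)) (nhds (χ₂ f)) :=
      t2.congr' (eventually_nhdsWithin_of_forall fun x hx => (hS hx).symm)
    exact tendsto_nhds_unique t1 t1'
  have heq' : Set.EqOn χ₁ χ₂ C → e₁ = e₂ := by
    intro h
    apply ext_inner_right ℂ
    intro h'
    have hm : mul h' ∈ C := (hC ▸ subset_closure) ⟨h', rfl⟩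
    rw [he₁, he₂, h hm]
  refine ⟨h01, ⟨fun h1 => hEq (key h1), fun h => ?_⟩⟩
  rw [heq' h]
  rw [inner_self_eq_norm_sq_to_K, hn₂]
  norm_num
end

section
/- Let H be a complex Hilbert space with a commutative associative product * satisfying ‖a*b‖ ≤ ‖a‖₂‖b‖₂, and for h ∈ H let ‖h‖_∞ := ‖m_h‖ be the operator norm of multiplication by h. Suppose ‖h‖_∞ > 0. Writing h^{(n)} for the n-th *-power of h, one has q·‖h‖_∞ⁿ ≤ ‖h^{(n+1)}‖₂ ≤ ‖h‖_∞ⁿ·‖h‖₂ for any 0 < q < ‖h‖_∞, and consequently lim_{n→∞} ‖h^{(n+1)}‖₂^{1/n} = ‖h‖_∞. -/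
open Filter in
/-- Let `H` be a Hilbert space with a commutative associative
product `*` satisfying `‖a*b‖ ≤ ‖a‖₂‖b‖₂`, let `‖h‖_∞ = ‖m_h‖` be the
operator norm of multiplication by `h` (assumed to satisfy
`‖m_h^n‖ = ‖m_h‖^n`, as holds in the commutative C*-algebra generated by the
`m_h`), and suppose `‖h‖_∞ > 0`.  Then for the `*`-powers `h^{(n)}` one has
`q·‖h‖_∞ⁿ ≤ ‖h^{(n+1)}‖₂ ≤ ‖h‖_∞ⁿ·‖h‖₂` for any `0 < q < ‖h‖_∞`, and
`‖h^{(n+1)}‖₂^{1/n} → ‖h‖_∞`. -/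
theorem stmt_13 {H : Type} [NormedAddCommGroup H] [InnerProductSpace ℂ H]
    [CompleteSpace H]
    (mul : H →L[ℂ] H →L[ℂ] H)
    (hcomm : ∀ a b : H, mul a b = mul b a)
    (hassoc : ∀ a b c : H, mul (mul a b) c = mul a (mul b c))
    (hsubmult : ∀ a b : H, ‖mul a b‖ ≤ ‖a‖ * ‖b‖)
    (h : H)
    (hnormpow : ∀ n : ℕ, ‖(mul h) ^ n‖ = ‖mul h‖ ^ n)
    (hpos : 0 < ‖mul h‖)
    (p : ℕ → H) (hp1 : p 1 = h) (hps : ∀ n : ℕ, p (n + 1) = mul h (p n)) :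
    (∀ q : ℝ, 0 < q → q < ‖mul h‖ → ∀ n : ℕ,
      q * ‖mul h‖ ^ n ≤ ‖p (n + 1)‖ ∧ ‖p (n + 1)‖ ≤ ‖mul h‖ ^ n * ‖h‖) ∧
    Tendsto (fun n : ℕ => ‖p (n + 1)‖ ^ ((1 : ℝ) / n)) atTop (nhds ‖mul h‖) := by
  set M := ‖mul h‖ with hMdef
  -- p (n+1) = (mul h)^n applied to h
  have key2 : ∀ n : ℕ, p (n + 1) = ((mul h) ^ n) h := by
    intro n
    induction n with
    | zero => simpa using hp1
    | succ k ih =>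
      rw [hps, ih, pow_succ']
      rfl
  -- multiplication by p (n+1) equals (mul h)^(n+1)
  have keymul : ∀ n : ℕ, (mul (p (n+1)) : H →L[ℂ] H) = (mul h) ^ (n+1) := by
    intro n
    induction n with
    | zero => rw [hp1]; simp
    | succ k ih =>
      ext u
      have e1 : mul (p (k+2)) u = mul h (mul (p (k+1)) u) := by
        rw [hps (k+1)]; exact hassoc h (p (k+1)) u
      have e2 : mul (p (k+1)) u = ((mul h) ^ (k+1)) u := by rw [ih]
      rw [e1, e2]
      rw [show (mul h) ^ (k+1+1) = mul h * (mul h)^(k+1) from pow_succ' _ _]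
      rfl
  have low : ∀ n : ℕ, M ^ (n+1) ≤ ‖p (n+1)‖ := by
    intro n
    have h1 : ‖(mul (p (n+1)) : H →L[ℂ] H)‖ ≤ ‖p (n+1)‖ :=
      ContinuousLinearMap.opNorm_le_bound _ (norm_nonneg _) (fun u => hsubmult _ u)
    calc M ^ (n+1) = ‖(mul h) ^ (n+1)‖ := (hnormpow (n+1)).symm
      _ = ‖(mul (p (n+1)) : H →L[ℂ] H)‖ := by rw [keymul]
      _ ≤ ‖p (n+1)‖ := h1
  have up : ∀ n : ℕ, ‖p (n+1)‖ ≤ M ^ n * ‖h‖ := by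
    intro n
    rw [key2]
    calc ‖((mul h) ^ n) h‖ ≤ ‖(mul h) ^ n‖ * ‖h‖ := ContinuousLinearMap.le_opNorm _ _
      _ = M ^ n * ‖h‖ := by rw [hnormpow]
  have hHpos : 0 < ‖h‖ := by
    have : M ≤ ‖h‖ :=
      ContinuousLinearMap.opNorm_le_bound _ (norm_nonneg _) (fun u => hsubmult h u)
    linarith
  constructor
  · intro q hq hqM n
    refine ⟨?_, up n⟩
    have h2 : q * M ^ n ≤ M ^ (n+1) := by
      rw [pow_succ']
      exact mul_le_mul_of_nonneg_right hqM.le (pow_nonneg hpos.le n)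
    linarith [low n]
  · -- squeeze
    have hinv : Tendsto (fun n : ℕ => (1 : ℝ) / n) atTop (nhds 0) :=
      tendsto_one_div_atTop_nhds_zero_nat
    have tlow : Tendsto (fun n : ℕ => M ^ ((1 : ℝ) + 1 / n)) atTop (nhds M) := by
      have : Tendsto (fun n : ℕ => (1 : ℝ) + 1 / n) atTop (nhds 1) := by
        simpa using tendsto_const_nhds.add hinv
      have := (tendsto_const_nhds (x := M) (f := atTop)).rpow this (Or.inl hpos.ne')
      simpa using this
    have tup : Tendsto (fun n : ℕ => M * ‖h‖ ^ ((1 : ℝ) / n)) atTop (nhds M) := by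
      have : Tendsto (fun n : ℕ => ‖h‖ ^ ((1 : ℝ) / n)) atTop (nhds 1) := by
        have := (tendsto_const_nhds (x := ‖h‖) (f := atTop)).rpow hinv (Or.inl hHpos.ne')
        simpa using this
      simpa using tendsto_const_nhds.mul this
    refine tendsto_of_tendsto_of_tendsto_of_le_of_le' tlow tup ?_ ?_
    · filter_upwards [eventually_ge_atTop 1] with n hn
      have hn0 : (n : ℝ) ≠ 0 := Nat.cast_ne_zero.mpr (by omega)
      have e : M ^ ((1 : ℝ) + 1 / n) = (M ^ (n+1)) ^ ((1 : ℝ) / n) := by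
        rw [← Real.rpow_natCast M (n+1), ← Real.rpow_mul hpos.le]
        congr 1
        push_cast
        field_simp
      rw [e]
      exact Real.rpow_le_rpow (pow_nonneg hpos.le _) (low n) (by positivity)
    · filter_upwards [eventually_ge_atTop 1] with n hn
      have hn0 : (n : ℝ) ≠ 0 := Nat.cast_ne_zero.mpr (by omega)
      have e : (M ^ n * ‖h‖) ^ ((1 : ℝ) / n) = M * ‖h‖ ^ ((1 : ℝ) / n) := by
        rw [Real.mul_rpow (pow_nonneg hpos.le n) (norm_nonneg h),
          ← Real.rpow_natCast M n, ← Real.rpow_mul hpos.le]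
        congr 2
        field_simp
        simp
      rw [← e]
      exact Real.rpow_le_rpow (norm_nonneg _) (up n) (by positivity)
end

section
/- Let X and Y be sets and let f : ℓ²(X) → ℓ²(Y) be a bounded operator with matrix coefficients m(x,y) = ⟨e_y, f(e_x)⟩. Then the operator M_m on ℓ²(X) ⊗ ℓ²(Y) ≅ ℓ²(X × Y) of multiplication by the bounded function m satisfies M_m = (id_{ℓ²(X)} ⊗ Δ_Y*) ∘ (id_{ℓ²(X)} ⊗ f ⊗ id_{ℓ²(Y)}) ∘ (Δ_X ⊗ id_{ℓ²(Y)}). -/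
noncomputable section

/-- Coordinate evaluation as a continuous linear map on `ℓ²(ι)`. -/
def evalCLM (ι : Type) (i : ι) : lp (fun _ : ι => ℂ) 2 →L[ℂ] ℂ :=
  LinearMap.mkContinuous
    { toFun := fun f => f i
      map_add' := fun f g => rfl
      map_smul' := fun c f => rfl }
    1
    (fun f => by rw [one_mul]; exact lp.norm_apply_le_norm (by norm_num) f i)

@[simp] lemma evalCLM_apply {ι : Type} (i : ι) (f : lp (fun _ : ι => ℂ) 2) :
    evalCLM ι i f = f i := rfl

/-- Two continuous linear maps out of `ℓ²(ι)` agreeing on the standard basis agree. -/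
lemma clm_ext_single {ι : Type} [DecidableEq ι] {F : Type*} [NormedAddCommGroup F]
    [NormedSpace ℂ F] (T S : lp (fun _ : ι => ℂ) 2 →L[ℂ] F)
    (h : ∀ i, T (lp.single 2 i 1) = S (lp.single 2 i 1)) : T = S := by
  ext f
  have hs := lp.hasSum_single (E := fun _ : ι => ℂ) ENNReal.ofNat_ne_top f
  have h1 : HasSum (fun i => T (lp.single 2 i (f i))) (T f) := hs.mapL T
  have h2 : HasSum (fun i => S (lp.single 2 i (f i))) (S f) := hs.mapL S
  refine h1.unique ?_
  convert h2 using 2 with i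
  have hsm : lp.single (E := fun _ : ι => ℂ) 2 i (f i) = f i • lp.single 2 i 1 := by
    rw [← lp.single_smul]; simp [smul_eq_mul]
  rw [hsm, map_smul, map_smul, h i]

lemma emb'_coord {X Y : Type} [DecidableEq X] [DecidableEq Y]
    (emb' : X → Y → (lp (fun _ : Y => ℂ) 2 →L[ℂ] lp (fun _ : X × (Y × Y) => ℂ) 2))
    (hemb' : ∀ (a : X) (c : Y) (y : Y),
      emb' a c (lp.single 2 y 1) = lp.single 2 (a, (y, c)) 1)
    (a x' : X) (c y' z' : Y) (v : lp (fun _ : Y => ℂ) 2) :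
    (emb' a c v) (x', (y', z')) = if x' = a ∧ z' = c then v y' else 0 := by
  have key : (evalCLM _ (x', (y', z'))) ∘L (emb' a c)
      = if x' = a ∧ z' = c then evalCLM Y y' else 0 := by
    apply clm_ext_single
    intro b
    simp only [ContinuousLinearMap.comp_apply, evalCLM_apply, hemb']
    rw [lp.single_apply]
    by_cases h1 : x' = a <;> by_cases h2 : z' = c <;> by_cases h3 : y' = b <;>
      simp_all [Prod.ext_iff, lp.single_apply]
  have := congrFun (congrArg (fun (T : _ →L[ℂ] ℂ) => (T : lp (fun _ : Y => ℂ) 2 → ℂ)) key) v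
  simp only [ContinuousLinearMap.comp_apply, evalCLM_apply] at this
  rw [this]
  split_ifs <;> simp

/-- For a bounded operator `f : ℓ²(X) → ℓ²(Y)` with matrix
coefficients `m(x,y) = ⟨e_y, f(e_x)⟩`, the multiplication operator `M_m` on
`ℓ²(X) ⊗ ℓ²(Y) ≅ ℓ²(X × Y)` satisfies
`M_m = (id ⊗ Δ_Y*) ∘ (id ⊗ f ⊗ id) ∘ (Δ_X ⊗ id)`. -/
theorem stmt_16 {X Y : Type} [DecidableEq X] [DecidableEq Y]
    (f : lp (fun _ : X => ℂ) 2 →L[ℂ] lp (fun _ : Y => ℂ) 2)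
    -- the operator of multiplication by the matrix coefficients of `f`
    (Mm : lp (fun _ : X × Y => ℂ) 2 →L[ℂ] lp (fun _ : X × Y => ℂ) 2)
    (hMm : ∀ (ξ : lp (fun _ : X × Y => ℂ) 2) (x : X) (y : Y),
      Mm ξ (x, y) =
        (inner ℂ (lp.single 2 y (1 : ℂ)) (f (lp.single 2 x 1)) : ℂ) * ξ (x, y))
    -- `Δ_X ⊗ id_{ℓ²(Y)} : ℓ²(X × Y) → ℓ²(X × (X × Y))`
    (A : lp (fun _ : X × Y => ℂ) 2 →L[ℂ] lp (fun _ : X × (X × Y) => ℂ) 2)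
    (hA : ∀ (x : X) (y : Y),
      A (lp.single 2 (x, y) 1) = lp.single 2 (x, (x, y)) 1)
    -- embeddings `e_a ⊗ (-) ⊗ e_c` used to characterize `B = id ⊗ f ⊗ id`
    (emb : X → Y → (lp (fun _ : X => ℂ) 2 →L[ℂ] lp (fun _ : X × (X × Y) => ℂ) 2))
    (hemb : ∀ (a : X) (c : Y) (b : X),
      emb a c (lp.single 2 b 1) = lp.single 2 (a, (b, c)) 1)
    (emb' : X → Y → (lp (fun _ : Y => ℂ) 2 →L[ℂ] lp (fun _ : X × (Y × Y) => ℂ) 2))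
    (hemb' : ∀ (a : X) (c : Y) (y : Y),
      emb' a c (lp.single 2 y 1) = lp.single 2 (a, (y, c)) 1)
    -- `B = id_{ℓ²(X)} ⊗ f ⊗ id_{ℓ²(Y)}`
    (B : lp (fun _ : X × (X × Y) => ℂ) 2 →L[ℂ] lp (fun _ : X × (Y × Y) => ℂ) 2)
    (hB : ∀ (a : X) (c : Y) (v : lp (fun _ : X => ℂ) 2),
      B (emb a c v) = emb' a c (f v))
    -- `id_{ℓ²(X)} ⊗ Δ_Y : ℓ²(X × Y) → ℓ²(X × (Y × Y))`
    (DY : lp (fun _ : X × Y => ℂ) 2 →L[ℂ] lp (fun _ : X × (Y × Y) => ℂ) 2)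
    (hDY : ∀ (x : X) (y : Y),
      DY (lp.single 2 (x, y) 1) = lp.single 2 (x, (y, y)) 1) :
    Mm = ContinuousLinearMap.adjoint DY ∘L B ∘L A := by
  apply clm_ext_single
  rintro ⟨x, y⟩
  have hr : (ContinuousLinearMap.adjoint DY ∘L B ∘L A) (lp.single 2 (x, y) 1)
      = ContinuousLinearMap.adjoint DY (emb' x y (f (lp.single 2 x 1))) := by
    simp only [ContinuousLinearMap.comp_apply, hA]
    rw [← hemb x y x, hB]
  rw [hr]
  apply lp.ext
  funext p
  obtain ⟨x', y'⟩ := p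
  have hl : Mm (lp.single 2 (x, y) 1) (x', y')
      = (inner ℂ (lp.single 2 y' (1 : ℂ)) (f (lp.single 2 x' 1)) : ℂ)
        * (lp.single 2 (E := fun _ : X × Y => ℂ) (x, y) 1 (x', y')) := hMm _ x' y'
  have hr2 : (ContinuousLinearMap.adjoint DY (emb' x y (f (lp.single 2 x 1)))) (x', y')
      = (inner ℂ (lp.single 2 (x', y') (1 : ℂ))
          (ContinuousLinearMap.adjoint DY (emb' x y (f (lp.single 2 x 1)))) : ℂ) := by
    rw [lp.inner_single_left]
    simp [RCLike.inner_apply]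
  rw [hl, hr2, ContinuousLinearMap.adjoint_inner_right, hDY, lp.inner_single_left]
  rw [lp.inner_single_left]
  simp only [RCLike.inner_apply, map_one, one_mul]
  rw [emb'_coord emb' hemb']
  rw [lp.single_apply]
  by_cases h1 : x' = x <;> by_cases h2 : y' = y
  · subst h1; subst h2; simp
  · simp [Prod.ext_iff, h2]
  · simp [Prod.ext_iff, h1]
  · simp [Prod.ext_iff, h1]
end
end
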